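/- The relation ≤₀ is a pre-well-order on the set of worms W_{Γ₀}: it is a reflexive and transitive relation, it is total (for all worms A, B, either A ≤₀ B or B ≤₀ A), and every nonempty set of worms has a ≤₀-minimal element. -/

import Mathlib

open Ordinal

/-- The binary Veblen function: `veblen 0 β = ω ^ β` and, for `α > 0`, `veblen α`
enumerates the common fixed points of the functions `veblen ξ` for `ξ < α`. -/
noncomputable def veblen (α : Ordinal.{0}) : Ordinal.{0} → Ordinal.{0} :=
  if α = 0 then fun β => omega0 ^ β
  else derivFamily (familyOfBFamily α fun ξ h => veblen ξ)
termination_by α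
decreasing_by exact h

/-- The Feferman–Schütte ordinal `Γ₀`: the least nonzero ordinal closed under the
binary Veblen function. -/
noncomputable def Gamma0 : Ordinal.{0} :=
  sInf {L | 0 < L ∧ ∀ α < L, ∀ β < L, _root_.veblen α β < L}

/-- Strictly positive modal formulas with modalities indexed by ordinals. -/
inductive RCF : Type 1 where
  | top : RCF
  | var : ℕ → RCF
  | and : RCF → RCF → RCF
  | dia : Ordinal.{0} → RCF → RCF

/-- `φ.bounded Λ` holds iff all modalities occurring in `φ` are `< Λ`,
i.e. iff `φ` is an `RC_Λ`-formula. -/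
def RCF.bounded (Λ : Ordinal) : RCF → Prop
  | .top => True
  | .var _ => True
  | .and φ ψ => φ.bounded Λ ∧ ψ.bounded Λ
  | .dia α φ => α < Λ ∧ φ.bounded Λ

/-- Worms: formulas built from `⊤` by prefixing modalities. -/
def RCF.isWorm : RCF → Prop
  | .top => True
  | .var _ => False
  | .and _ _ => False
  | .dia _ φ => φ.isWorm

/-- The signature of a formula: the set of ordinals occurring in its modalities. -/
def RCF.sig : RCF → Set Ordinal
  | .top => ∅
  | .var _ => ∅
  | .and φ ψ => φ.sig ∪ ψ.sig
  | .dia α φ => insert α φ.sig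

/-- Derivability in the reflection calculus `RC_Λ`. -/
inductive RCder (Λ : Ordinal) : RCF → RCF → Prop where
  | id : ∀ φ, φ.bounded Λ → RCder Λ φ φ
  | topI : ∀ φ, φ.bounded Λ → RCder Λ φ .top
  | andE₁ : ∀ φ ψ, φ.bounded Λ → ψ.bounded Λ → RCder Λ (.and φ ψ) φ
  | andE₂ : ∀ φ ψ, φ.bounded Λ → ψ.bounded Λ → RCder Λ (.and φ ψ) ψ
  | diaTrans : ∀ α φ, α < Λ → φ.bounded Λ → RCder Λ (.dia α (.dia α φ)) (.dia α φ)
  | diaDown : ∀ α β φ, β < α → α < Λ → φ.bounded Λ → RCder Λ (.dia α φ) (.dia β φ)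
  | diaConj : ∀ α β φ ψ, β < α → α < Λ → φ.bounded Λ → ψ.bounded Λ →
      RCder Λ (.and (.dia α φ) (.dia β ψ)) (.dia α (.and φ (.dia β ψ)))
  | andI : ∀ {φ ψ χ}, RCder Λ φ ψ → RCder Λ φ χ → RCder Λ φ (.and ψ χ)
  | cut : ∀ {φ ψ χ}, RCder Λ φ ψ → RCder Λ ψ χ → RCder Λ φ χ
  | diaMono : ∀ {φ ψ} (α), α < Λ → RCder Λ φ ψ → RCder Λ (.dia α φ) (.dia α ψ)

/-- Membership in `W_{Γ₀}`: worms of `RC_{Γ₀}`. -/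
def isGWorm (A : RCF) : Prop := A.isWorm ∧ A.bounded Gamma0

/-- `WormLT B A` is the consistency ordering `B <₀ A` on worms of `W_{Γ₀}`:
`A ⊢_{RC_{Γ₀}} ⟨0⟩B`. -/
def WormLT (B A : RCF) : Prop :=
  isGWorm A ∧ isGWorm B ∧ RCder Gamma0 A (.dia 0 B)

/- The order type `o A` of a worm, defined recursively by
`o A = sup_{B <₀ A} (o B + 1)` (well-defined since `<₀` is well-founded). -/
open Classical in
noncomputable def wormO (A : RCF) : Ordinal.{0} :=
  if h : WellFounded WormLT then
    h.fix (C := fun _ => Ordinal.{0})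
      (fun B ih => ⨆ C : {C : RCF // WormLT C B}, (ih C.1 C.2 + 1)) A
  else 0

/-- `wleq B A` is `B ≤₀ A`: either `B <₀ A` (i.e. `A ⊢_{RC_{Γ₀}} ⟨0⟩B`), or
`A` and `B` are provably equivalent in `RC_{Γ₀}`. -/
def wleq (B A : RCF) : Prop :=
  RCder Gamma0 A (.dia 0 B) ∨ (RCder Gamma0 A B ∧ RCder Gamma0 B A)

theorem veblen_def (α : Ordinal.{0}) : _root_.veblen α =
    if α = 0 then fun β => omega0 ^ β
    else derivFamily (familyOfBFamily α fun ξ _ => _root_.veblen ξ) := by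
  rw [_root_.veblen]

theorem veblen_zero (β : Ordinal.{0}) : _root_.veblen 0 β = omega0 ^ β := by
  rw [veblen_def]; simp

theorem veblen_normal : ∀ α : Ordinal.{0}, Order.IsNormal (_root_.veblen α) := by
  intro α
  induction α using Ordinal.induction with
  | _ α ih =>
    rw [veblen_def]
    split
    · exact isNormal_opow one_lt_omega0
    · exact isNormal_derivFamily _

theorem veblen_fp {μ α : Ordinal.{0}} (h : μ < α) (x : Ordinal.{0}) :
    _root_.veblen μ (_root_.veblen α x) = _root_.veblen α x := by
  have hα : α ≠ 0 := fun e => by simp [e] at h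
  conv_rhs => rw [veblen_def]
  conv_lhs => rw [veblen_def α]
  simp only [hα, if_false]
  have := derivFamily_fp (f := familyOfBFamily α fun ξ (_ : ξ < α) => _root_.veblen ξ)
    (i := enum (α := α.ToType) (· < ·) ⟨μ, h.trans_eq (type_toType _).symm⟩)
    (by rw [familyOfBFamily_enum α _ μ h]; exact veblen_normal μ) x
  rwa [familyOfBFamily_enum α _ μ h] at this


/-- one closure step -/
noncomputable def vStep (γ : Ordinal.{0}) : Ordinal.{0} :=
  max (γ + 1) (⨆ p : (Set.Iio γ) × (Set.Iio γ), (_root_.veblen p.1.1 p.2.1 + 1))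

theorem lt_vStep (γ : Ordinal.{0}) : γ < vStep γ := lt_of_lt_of_le (lt_add_one γ) (le_max_left _ _)

theorem veblen_lt_vStep {a b γ : Ordinal.{0}} (ha : a < γ) (hb : b < γ) :
    _root_.veblen a b < vStep γ := by
  have : _root_.veblen a b + 1 ≤ ⨆ p : (Set.Iio γ) × (Set.Iio γ), (_root_.veblen p.1.1 p.2.1 + 1) :=
    Ordinal.le_iSup (fun p : (Set.Iio γ) × (Set.Iio γ) => _root_.veblen p.1.1 p.2.1 + 1)
      (⟨⟨a, ha⟩, ⟨b, hb⟩⟩)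
  exact lt_of_lt_of_le (lt_of_lt_of_le (lt_add_one _) this) (le_max_right _ _)

theorem vStep_mono : Monotone vStep := by
  intro x y hxy
  apply max_le
  · exact le_max_left _ _ |>.trans' (by exact add_le_add_left hxy 1)
  · refine le_trans ?_ (le_max_right _ _)
    apply Ordinal.iSup_le
    intro p
    exact Ordinal.le_iSup (fun p : (Set.Iio y) × (Set.Iio y) => _root_.veblen p.1.1 p.2.1 + 1)
      (⟨⟨p.1.1, lt_of_lt_of_le p.1.2 hxy⟩, ⟨p.2.1, lt_of_lt_of_le p.2.2 hxy⟩⟩)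

theorem gammaSet_nonempty : {L : Ordinal.{0} | 0 < L ∧ ∀ α < L, ∀ β < L, _root_.veblen α β < L}.Nonempty := by
  refine ⟨⨆ n : ℕ, vStep^[n] 1, ?_, ?_⟩
  · have : (1 : Ordinal.{0}) ≤ ⨆ n : ℕ, vStep^[n] 1 :=
      Ordinal.le_iSup (fun n : ℕ => vStep^[n] 1) 0
    exact lt_of_lt_of_le zero_lt_one this
  · intro a ha b hb
    have hit : ∀ n : ℕ, vStep^[n] 1 < vStep^[n+1] 1 := by
      intro n
      rw [Function.iterate_succ_apply']
      exact lt_vStep _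
    have hmono : ∀ m n : ℕ, m ≤ n → vStep^[m] 1 ≤ vStep^[n] 1 := by
      intro m n h
      induction n with
      | zero => simp_all
      | succ k ihk =>
        rcases Nat.lt_or_ge m (k+1) with h'|h'
        · exact le_trans (ihk (Nat.lt_succ_iff.1 h')) (hit k).le
        · have : m = k+1 := le_antisymm h h'
          simp [this]
    obtain ⟨n, hn⟩ := Ordinal.lt_iSup_iff.1 ha
    obtain ⟨m, hm⟩ := Ordinal.lt_iSup_iff.1 hb
    have ha' : a < vStep^[max n m] 1 := lt_of_lt_of_le hn (hmono _ _ (Nat.le_max_left n m))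
    have hb' : b < vStep^[max n m] 1 := lt_of_lt_of_le hm (hmono _ _ (Nat.le_max_right n m))
    have : _root_.veblen a b < vStep^[max n m + 1] 1 := by
      rw [Function.iterate_succ_apply']
      exact veblen_lt_vStep ha' hb'
    exact lt_of_lt_of_le this (Ordinal.le_iSup (fun n : ℕ => vStep^[n] 1) (max n m + 1))

theorem Gamma0_mem : Gamma0 ∈ {L : Ordinal.{0} | 0 < L ∧ ∀ α < L, ∀ β < L, _root_.veblen α β < L} :=
  csInf_mem gammaSet_nonempty

theorem Gamma0_pos : 0 < Gamma0 := Gamma0_mem.1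

theorem veblen_lt_Gamma0 {a b : Ordinal.{0}} (ha : a < Gamma0) (hb : b < Gamma0) :
    _root_.veblen a b < Gamma0 := Gamma0_mem.2 a ha b hb

theorem opow_lt_Gamma0 {b : Ordinal.{0}} (hb : b < Gamma0) : omega0 ^ b < Gamma0 := by
  have := veblen_lt_Gamma0 Gamma0_pos hb
  rwa [_root_.veblen_zero] at this

theorem succ_lt_Gamma0 {c : Ordinal.{0}} (hc : c < Gamma0) : c + 1 < Gamma0 := by
  by_contra h
  push_neg at h
  have hG : Gamma0 = c + 1 :=
    le_antisymm h (by rw [add_one_eq_succ]; exact Order.succ_le_of_lt hc)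
  have hcpos : 0 < c := by
    rcases pos_iff_ne_zero.1 Gamma0_pos |> fun _ => Classical.em (c = 0) with h0|h0
    · exfalso
      have h1 : _root_.veblen 0 0 < Gamma0 := veblen_lt_Gamma0 Gamma0_pos Gamma0_pos
      rw [_root_.veblen_zero, opow_zero, hG, h0, zero_add] at h1
      exact lt_irrefl _ h1
    · exact pos_iff_ne_zero.2 h0
  have hfix : ∀ a < c, _root_.veblen a c = c := by
    intro a ha
    have h1 : _root_.veblen a c < c + 1 := hG ▸ veblen_lt_Gamma0 (ha.trans hc) hc
    have h2 : c ≤ _root_.veblen a c := (veblen_normal a).strictMono.le_apply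
    rw [add_one_eq_succ] at h1
    exact le_antisymm (Order.lt_succ_iff.1 h1) h2
  have hmem : c ∈ {L : Ordinal.{0} | 0 < L ∧ ∀ α < L, ∀ β < L, _root_.veblen α β < L} := by
    refine ⟨hcpos, fun a ha b hb => ?_⟩
    calc _root_.veblen a b < _root_.veblen a c := (veblen_normal a).strictMono hb
    _ = c := hfix a ha
  have : Gamma0 ≤ c := csInf_le (OrderBot.bddBelow _) hmem
  exact absurd hc (not_lt.2 this)

theorem add_lt_Gamma0 {a b : Ordinal.{0}} (ha : a < Gamma0) (hb : b < Gamma0) :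
    a + b < Gamma0 := by
  set m := max a b with hm
  have hmG : m < Gamma0 := max_lt ha hb
  have h1 : a + b < omega0 ^ (m + 1) := by
    apply principal_add_omega0_opow
    · exact lt_of_le_of_lt (le_max_left a b) (lt_of_le_of_lt (right_le_opow m one_lt_omega0)
        ((opow_lt_opow_iff_right one_lt_omega0).2 (lt_add_one m)))
    · exact lt_of_le_of_lt (le_max_right a b) (lt_of_le_of_lt (right_le_opow m one_lt_omega0)
        ((opow_lt_opow_iff_right one_lt_omega0).2 (lt_add_one m)))
  exact h1.trans (opow_lt_Gamma0 (succ_lt_Gamma0 hmG))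

theorem sub_opow_log_lt_self {a : Ordinal.{0}} (ha : a ≠ 0) :
    a - omega0 ^ log omega0 a < a := by
  set η := log omega0 a with hη
  have h1 : omega0 ^ η ≤ a := opow_log_le_self omega0 ha
  rcases lt_or_ge (a - omega0 ^ η) a with h|h
  · exact h
  · exfalso
    have heq : a - omega0 ^ η = a := le_antisymm (sub_le_self a _) h
    have h2 : omega0 ^ η + a = a := by
      conv_lhs => rw [← heq]
      exact Ordinal.add_sub_cancel_of_le h1
    have h3 : omega0 ^ η * omega0 ≤ a := add_eq_right_iff_mul_omega0_le.1 h2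
    have h4 : omega0 ^ (η + 1) ≤ a := by
      rw [opow_add, opow_one]; exact h3
    exact absurd (lt_opow_succ_log_self one_lt_omega0 a) (not_lt.2 h4)

noncomputable def hexp (a : Ordinal.{0}) (δ : Ordinal.{0}) : Ordinal.{0} :=
  if h : a = 0 then δ
  else _root_.veblen (log omega0 a) (hexp (a - omega0 ^ log omega0 a) δ)
termination_by a
decreasing_by exact sub_opow_log_lt_self h

theorem hexp_zero (δ : Ordinal.{0}) : hexp 0 δ = δ := by rw [hexp]; simp

theorem hexp_ne {a : Ordinal.{0}} (h : a ≠ 0) (δ : Ordinal.{0}) :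
    hexp a δ = _root_.veblen (log omega0 a) (hexp (a - omega0 ^ log omega0 a) δ) := by
  conv_lhs => rw [hexp]
  simp [h]

theorem hexp_le_self (a δ : Ordinal.{0}) : δ ≤ hexp a δ := by
  induction a using Ordinal.induction with
  | _ a ih =>
    rcases eq_or_ne a 0 with h|h
    · rw [h, hexp_zero]
    · rw [hexp_ne h]
      exact le_trans (ih _ (sub_opow_log_lt_self h)) (veblen_normal _).strictMono.le_apply

theorem hexp_strictMono (a : Ordinal.{0}) : StrictMono (hexp a) := by
  induction a using Ordinal.induction with
  | _ a ih =>
    rcases eq_or_ne a 0 with h|h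
    · intro x y hxy; rwa [h, hexp_zero, hexp_zero]
    · intro x y hxy
      rw [hexp_ne h, hexp_ne h]
      exact (veblen_normal _).strictMono (ih _ (sub_opow_log_lt_self h) hxy)

/-- infinite additively principal ordinals -/
def APinf (c : Ordinal.{0}) : Prop := ∃ d : Ordinal.{0}, 0 < d ∧ c = omega0 ^ d

theorem APinf.omega0_le {c : Ordinal.{0}} (h : APinf c) : omega0 ≤ c := by
  obtain ⟨d, hd, rfl⟩ := h
  calc omega0 = omega0 ^ (1:Ordinal) := (opow_one _).symm
  _ ≤ omega0 ^ d := opow_le_opow_right omega0_pos (Ordinal.one_le_iff_ne_zero.2 hd.ne')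

theorem APinf.pos {c : Ordinal.{0}} (h : APinf c) : 0 < c :=
  lt_of_lt_of_le omega0_pos h.omega0_le

theorem APinf.absorp {b c : Ordinal.{0}} (h : APinf c) (hb : b < c) : b + c = c := by
  obtain ⟨d, hd, rfl⟩ := h
  exact add_omega0_opow hb

theorem APinf.one_add {c : Ordinal.{0}} (h : APinf c) : 1 + c = c :=
  h.absorp (lt_of_lt_of_le one_lt_omega0 h.omega0_le)

theorem APinf.isLimit {c : Ordinal.{0}} (h : APinf c) : Order.IsSuccLimit c := by
  refine Ordinal.isSuccLimit_iff.2 ⟨pos_iff_ne_zero.1 h.pos, Order.isSuccPrelimit_of_succ_lt fun a ha => ?_⟩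
  have h1 : a + 1 < a + c := by
    have : (1:Ordinal) < c := lt_of_lt_of_le one_lt_omega0 h.omega0_le
    exact add_lt_add_right this a
  rw [h.absorp ha] at h1
  rwa [add_one_eq_succ] at h1

theorem APinf.lt_add {a b c : Ordinal.{0}} (h : APinf c) (hb : b < a + c) :
    b + c ≤ a + c := by
  rcases le_or_gt b a with hba|hab
  · exact add_le_add_left hba c
  · have hab' : a + (b - a) = b := Ordinal.add_sub_cancel_of_le hab.le
    have hlt : b - a < c := by
      have h' : a + (b - a) < a + c := by rw [hab']; exact hb
      exact (add_lt_add_iff_left a).1 h'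
    calc b + c = a + ((b - a) + c) := by rw [← add_assoc, hab']
    _ = a + c := by rw [h.absorp hlt]
    _ ≤ a + c := le_refl _

theorem hexp_apinf {a δ : Ordinal.{0}} (ha : a ≠ 0) (hδ : 1 ≤ δ) : APinf (hexp a δ) := by
  rw [hexp_ne ha]
  have hx : 1 ≤ hexp (a - omega0 ^ log omega0 a) δ := le_trans hδ (hexp_le_self _ _)
  set η := log omega0 a
  set x := hexp (a - omega0 ^ η) δ
  rcases eq_or_ne η 0 with h0|h0
  · rw [h0, _root_.veblen_zero]
    exact ⟨x, lt_of_lt_of_le zero_lt_one hx, rfl⟩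
  · refine ⟨_root_.veblen η x, ?_, ?_⟩
    · exact lt_of_lt_of_le (lt_of_lt_of_le zero_lt_one hx) (veblen_normal η).strictMono.le_apply
    · have := veblen_fp (pos_iff_ne_zero.2 h0) x
      rw [_root_.veblen_zero] at this
      exact this.symm

theorem hexp_fix : ∀ (a : Ordinal.{0}) {μ z : Ordinal.{0}}, μ ≠ 0 → a < omega0 ^ μ →
    (∀ ν < μ, _root_.veblen ν z = z) → hexp a z = z := by
  intro a
  induction a using Ordinal.induction with
  | _ a ih =>
    intro μ z hμ ha hz
    rcases eq_or_ne a 0 with h|h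
    · rw [h, hexp_zero]
    · have hηheadlt : log omega0 a < μ := by
        by_contra hcon
        push_neg at hcon
        have : omega0 ^ μ ≤ a :=
          le_trans (opow_le_opow_right omega0_pos hcon) (opow_log_le_self omega0 h)
        exact absurd ha (not_lt.2 this)
      rw [hexp_ne h, ih _ (sub_opow_log_lt_self h) hμ
        (lt_of_le_of_lt (sub_le_self _ _) ha) hz]
      exact hz _ hηheadlt

theorem log_det {η z : Ordinal.{0}} (h1 : omega0 ^ η ≤ z) (h2 : z < omega0 ^ (η + 1)) :
    log omega0 z = η := by
  have hz : z ≠ 0 := by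
    intro h; rw [h] at h1
    exact absurd (opow_pos η omega0_pos) (not_lt.2 h1)
  refine le_antisymm ?_ ?_
  · by_contra hcon
    push_neg at hcon
    have : omega0 ^ (η + 1) ≤ omega0 ^ log omega0 z := by
      apply opow_le_opow_right omega0_pos
      rwa [add_one_eq_succ, Order.succ_le_iff]
    exact absurd h2 (not_lt.2 (le_trans this (opow_log_le_self omega0 hz)))
  · calc η = log omega0 (omega0 ^ η) := (log_opow one_lt_omega0 η).symm
    _ ≤ log omega0 z := log_mono_right _ h1

theorem hexp_add (a b δ : Ordinal.{0}) : hexp (a + b) δ = hexp a (hexp b δ) := by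
  induction a using Ordinal.induction generalizing b with
  | _ a ih =>
    rcases eq_or_ne a 0 with h|h
    · rw [h, zero_add, hexp_zero]
    rcases eq_or_ne b 0 with hb|hb
    · rw [hb, add_zero, hexp_zero]
    set η := log omega0 a with hη
    set μ := log omega0 b with hμ
    rcases lt_or_ge a (omega0 ^ μ) with hcase|hcase
    · have habs : a + b = b := add_absorp hcase (opow_log_le_self omega0 hb)
      rw [habs]
      have hμ0 : μ ≠ 0 := by
        intro h0
        rw [h0, opow_zero, Ordinal.lt_one_iff_zero] at hcase
        exact h hcase
      rw [hexp_ne hb δ]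
      rw [hexp_fix a hμ0 hcase (fun ν hν => veblen_fp hν _)]
    · have hμη : μ ≤ η := by
        calc μ = log omega0 (omega0 ^ μ) := (log_opow one_lt_omega0 μ).symm
        _ ≤ log omega0 a := log_mono_right _ hcase
      have h1 : omega0 ^ η ≤ a + b := le_trans (opow_log_le_self omega0 h) le_self_add
      have h2 : a + b < omega0 ^ (η + 1) := by
        apply principal_add_omega0_opow
        · exact lt_opow_succ_log_self one_lt_omega0 a
        · exact lt_of_lt_of_le (lt_opow_succ_log_self one_lt_omega0 b)
            (opow_le_opow_right omega0_pos (add_le_add_left hμη 1))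
      have hlog : log omega0 (a + b) = η := log_det h1 h2
      have hab0 : a + b ≠ 0 := by
        intro hc
        rcases Ordinal.add_eq_zero_iff.1 hc with ⟨h1', _⟩
        exact h h1'
      have hsub : (a + b) - omega0 ^ η = (a - omega0 ^ η) + b := by
        conv_lhs => rw [← Ordinal.add_sub_cancel_of_le (opow_log_le_self omega0 h)]
        rw [add_assoc, Ordinal.add_sub_cancel]
      rw [hexp_ne hab0, hlog, hsub, ih _ (sub_opow_log_lt_self h) b, ← hexp_ne h]

/-! ### Lists of ordinals: minimum, split at first occurrence -/

noncomputable def lmin : List Ordinal.{0} → Ordinal.{0}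
  | [] => 0
  | γ :: t => t.foldl min γ

theorem foldl_min_le_init {t : List Ordinal.{0}} {γ : Ordinal.{0}} : t.foldl min γ ≤ γ := by
  induction t generalizing γ with
  | nil => exact le_refl _
  | cons a t ih => exact le_trans ih (min_le_left _ _)

theorem foldl_min_mem (t : List Ordinal.{0}) (γ : Ordinal.{0}) :
    t.foldl min γ = γ ∨ t.foldl min γ ∈ t := by
  induction t generalizing γ with
  | nil => exact Or.inl rfl
  | cons a t ih =>
    rcases ih (min γ a) with h|h
    · rcases min_cases γ a with ⟨h1,_⟩|⟨h1,_⟩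
      · exact Or.inl (by rw [List.foldl_cons, h, h1])
      · exact Or.inr (by rw [List.foldl_cons, h, h1]; exact List.mem_cons_self)
    · exact Or.inr (List.mem_cons_of_mem _ h)

theorem foldl_min_le_mem {t : List Ordinal.{0}} {γ x : Ordinal.{0}} (hx : x ∈ t) :
    t.foldl min γ ≤ x := by
  induction t generalizing γ with
  | nil => cases hx
  | cons a t ih =>
    rcases List.mem_cons.1 hx with rfl|h
    · rw [List.foldl_cons]
      exact le_trans foldl_min_le_init (min_le_right _ _)
    · rw [List.foldl_cons]
      exact ih h

theorem lmin_mem {w : List Ordinal.{0}} (hw : w ≠ []) : lmin w ∈ w := by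
  cases w with
  | nil => exact absurd rfl hw
  | cons γ t =>
    rcases foldl_min_mem t γ with h|h
    · rw [lmin, h]; exact List.mem_cons_self
    · exact List.mem_cons_of_mem _ h

theorem lmin_le {w : List Ordinal.{0}} {x : Ordinal.{0}} (hx : x ∈ w) : lmin w ≤ x := by
  cases w with
  | nil => cases hx
  | cons γ t =>
    rcases List.mem_cons.1 hx with rfl|h
    · exact foldl_min_le_init
    · exact foldl_min_le_mem h

theorem le_lmin {w : List Ordinal.{0}} {b : Ordinal.{0}} (hw : w ≠ [])
    (h : ∀ x ∈ w, b ≤ x) : b ≤ lmin w := h _ (lmin_mem hw)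

/-- split a list at the first occurrence of `m` -/
noncomputable def sp (m : Ordinal.{0}) : List Ordinal.{0} → List Ordinal.{0} × List Ordinal.{0}
  | [] => ([], [])
  | γ :: t => if γ = m then ([], t) else (γ :: (sp m t).1, (sp m t).2)

theorem sp_append {m : Ordinal.{0}} : ∀ {w : List Ordinal.{0}}, m ∈ w →
    w = (sp m w).1 ++ m :: (sp m w).2 := by
  intro w
  induction w with
  | nil => intro h; cases h
  | cons γ t ih =>
    intro hm
    rcases eq_or_ne γ m with rfl|hne
    · simp [sp]
    · have hmt : m ∈ t := by
        rcases List.mem_cons.1 hm with h|h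
        · exact absurd h.symm hne
        · exact h
      simp only [sp, hne, if_false]
      rw [List.cons_append]
      exact congrArg (γ :: ·) (ih hmt)

theorem sp_fst_ne {m : Ordinal.{0}} : ∀ {w : List Ordinal.{0}} {x : Ordinal.{0}},
    x ∈ (sp m w).1 → x ≠ m := by
  intro w
  induction w with
  | nil => intro x h; cases h
  | cons γ t ih =>
    intro x h
    rcases eq_or_ne γ m with rfl|hne
    · simp [sp] at h
    · simp only [sp, hne, if_false] at h
      rcases List.mem_cons.1 h with rfl|h'
      · exact hne
      · exact ih h'

theorem sp_lengths {m : Ordinal.{0}} {w : List Ordinal.{0}} (hm : m ∈ w) :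
    (sp m w).1.length < w.length ∧ (sp m w).2.length < w.length := by
  have h := sp_append hm
  have hl : w.length = (sp m w).1.length + 1 + (sp m w).2.length := by
    conv_lhs => rw [h]
    simp [List.length_append]
    omega
  omega

theorem sp_fst_sub {m : Ordinal.{0}} : ∀ {w : List Ordinal.{0}} {x : Ordinal.{0}},
    x ∈ (sp m w).1 → x ∈ w := by
  intro w
  induction w with
  | nil => intro x h; cases h
  | cons γ t ih =>
    intro x h
    rcases eq_or_ne γ m with rfl|hne
    · simp [sp] at h
    · simp only [sp, hne, if_false] at h
      rcases List.mem_cons.1 h with rfl|h'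
      · exact List.mem_cons_self
      · exact List.mem_cons_of_mem _ (ih h')

theorem sp_snd_sub {m : Ordinal.{0}} : ∀ {w : List Ordinal.{0}} {x : Ordinal.{0}},
    x ∈ (sp m w).2 → x ∈ w := by
  intro w
  induction w with
  | nil => intro x h; cases h
  | cons γ t ih =>
    intro x h
    rcases eq_or_ne γ m with rfl|hne
    · simp only [sp, if_pos rfl] at h
      exact List.mem_cons_of_mem _ h
    · simp only [sp, hne, if_false] at h
      exact List.mem_cons_of_mem _ (ih h)

/-- the Beklemishev ordinal of a worm, as a list of ordinals -/
noncomputable def o : List Ordinal.{0} → Ordinal.{0}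
  | [] => 0
  | (γ :: t) =>
    have hm : lmin (γ :: t) ∈ (γ :: t) := lmin_mem (by simp)
    have h1 := (sp_lengths hm).1
    have h2 := (sp_lengths hm).2
    hexp (lmin (γ :: t))
      (o ((sp (lmin (γ :: t)) (γ :: t)).2.map (· - lmin (γ :: t))) + 1 +
       o ((sp (lmin (γ :: t)) (γ :: t)).1.map (· - lmin (γ :: t))))
termination_by w => w.length
decreasing_by
  · simpa using h2
  · simpa using h1

theorem o_nil : o [] = 0 := by rw [o]

theorem o_eq {w : List Ordinal.{0}} (hw : w ≠ []) :
    o w = hexp (lmin w)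
      (o ((sp (lmin w) w).2.map (· - lmin w)) + 1 + o ((sp (lmin w) w).1.map (· - lmin w))) := by
  cases w with
  | nil => exact absurd rfl hw
  | cons γ t => rw [o]

theorem o_pos {w : List Ordinal.{0}} (hw : w ≠ []) : 0 < o w := by
  rw [o_eq hw]
  have h1 : (1:Ordinal) ≤ o ((sp (lmin w) w).2.map (· - lmin w)) + 1 +
      o ((sp (lmin w) w).1.map (· - lmin w)) :=
    le_trans (le_add_self) le_self_add
  exact lt_of_lt_of_le zero_lt_one (le_trans h1 (hexp_le_self _ _))

theorem ord_sub_mono {γ δ m : Ordinal.{0}} (h : γ ≤ δ) : γ - m ≤ δ - m :=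
  Ordinal.sub_le.2 (le_trans h (Ordinal.le_add_sub δ m))

theorem min_sub_distrib (γ δ m : Ordinal.{0}) : min γ δ - m = min (γ - m) (δ - m) := by
  rcases le_total γ δ with h|h
  · rw [min_eq_left h, min_eq_left (ord_sub_mono h)]
  · rw [min_eq_right h, min_eq_right (ord_sub_mono h)]

theorem foldl_min_map_sub (m : Ordinal.{0}) : ∀ (t : List Ordinal.{0}) (γ : Ordinal.{0}),
    (t.map (· - m)).foldl min (γ - m) = (t.foldl min γ) - m := by
  intro t
  induction t with
  | nil => intro γ; simp
  | cons a t ih =>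
    intro γ
    rw [List.map_cons, List.foldl_cons, List.foldl_cons, ← min_sub_distrib, ih]

theorem lmin_map_sub {w : List Ordinal.{0}} (hw : w ≠ []) (m : Ordinal.{0}) :
    lmin (w.map (· - m)) = lmin w - m := by
  cases w with
  | nil => exact absurd rfl hw
  | cons γ t =>
    rw [List.map_cons]
    exact foldl_min_map_sub m t γ

theorem sub_inj_of_le {γ M m : Ordinal.{0}} (hγ : m ≤ γ) (hM : m ≤ M)
    (h : γ - m = M - m) : γ = M := by
  have h1 : m + (γ - m) = m + (M - m) := by rw [h]
  rwa [Ordinal.add_sub_cancel_of_le hγ, Ordinal.add_sub_cancel_of_le hM] at h1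

theorem sp_map_sub {M m : Ordinal.{0}} (hM : m ≤ M) :
    ∀ {w : List Ordinal.{0}}, (∀ γ ∈ w, m ≤ γ) →
    sp (M - m) (w.map (· - m)) = ((sp M w).1.map (· - m), (sp M w).2.map (· - m)) := by
  intro w
  induction w with
  | nil => intro _; simp [sp]
  | cons γ t ih =>
    intro hall
    have hγ : m ≤ γ := hall γ (List.mem_cons_self)
    rw [List.map_cons]
    rcases eq_or_ne γ M with rfl|hne
    · simp [sp]
    · have hne' : γ - m ≠ M - m := fun hc => hne (sub_inj_of_le hγ hM hc)
      simp only [sp, hne, hne', if_false]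
      rw [ih (fun x hx => hall x (List.mem_cons_of_mem _ hx))]
      simp

theorem ordSubSubCancel {M m γ : Ordinal.{0}} (h : m ≤ M) : (γ - m) - (M - m) = γ - M := by
  rw [Ordinal.sub_sub, Ordinal.add_sub_cancel_of_le h]

theorem o_shift {w : List Ordinal.{0}} (hw : w ≠ []) {m : Ordinal.{0}} (hm : m ≤ lmin w) :
    o w = hexp m (o (w.map (· - m))) := by
  set M := lmin w with hM
  have hmem : ∀ γ ∈ w, m ≤ γ := fun γ hγ => le_trans hm (lmin_le hγ)
  have hw' : w.map (· - m) ≠ [] := by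
    intro hc
    exact hw (List.map_eq_nil_iff.1 hc)
  have hl : lmin (w.map (· - m)) = M - m := lmin_map_sub hw m
  have hsp : sp (M - m) (w.map (· - m)) = ((sp M w).1.map (· - m), (sp M w).2.map (· - m)) :=
    sp_map_sub hm hmem
  have hcomp : ∀ u : List Ordinal.{0},
      ((u.map (· - m)).map (· - (M - m))) = u.map (· - M) := by
    intro u
    rw [List.map_map]
    apply List.map_congr_left
    intro x _
    exact ordSubSubCancel hm
  rw [o_eq hw', hl, hsp]
  simp only
  rw [hcomp, hcomp, ← hexp_add, Ordinal.add_sub_cancel_of_le hm, ← o_eq hw]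

theorem o_split0 {w : List Ordinal.{0}} (hw : w ≠ []) (h0 : lmin w = 0) :
    o w = o (sp 0 w).2 + 1 + o (sp 0 w).1 := by
  have hid : ∀ u : List Ordinal.{0}, u.map (· - 0) = u := by
    intro u
    have : ∀ x ∈ u, x - 0 = x := fun x _ => Ordinal.sub_zero x
    rw [List.map_congr_left this]
    exact List.map_id u
  rw [o_eq hw, h0, hexp_zero, hid, hid]

theorem o_apinf {w : List Ordinal.{0}} (hw : w ≠ []) (h : lmin w ≠ 0) : APinf (o w) := by
  rw [o_eq hw]
  exact hexp_apinf h (le_trans (le_add_self) le_self_add)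


/-! ### Worm formulas from lists -/

def wf : List Ordinal.{0} → RCF
  | [] => .top
  | γ :: t => .dia γ (wf t)

def LB (w : List Ordinal.{0}) : Prop := ∀ γ ∈ w, γ < Gamma0

theorem wf_bounded {w : List Ordinal.{0}} (h : LB w) : (wf w).bounded Gamma0 := by
  induction w with
  | nil => exact trivial
  | cons γ t ih =>
    exact ⟨h γ (List.mem_cons_self), ih (fun x hx => h x (List.mem_cons_of_mem _ hx))⟩

theorem wf_isWorm (w : List Ordinal.{0}) : (wf w).isWorm := by
  induction w with
  | nil => exact trivial
  | cons γ t ih => exact ih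

theorem wf_append (u x : List Ordinal.{0}) : wf (u ++ x) = match x with
  | _ => wf (u ++ x) := rfl

theorem LB_append {u x : List Ordinal.{0}} (h : LB (u ++ x)) : LB u ∧ LB x :=
  ⟨fun γ hγ => h γ (List.mem_append_left _ hγ), fun γ hγ => h γ (List.mem_append_right _ hγ)⟩

abbrev Der (φ ψ : RCF) : Prop := RCder Gamma0 φ ψ

theorem der_bounded {Λ : Ordinal} {φ ψ : RCF} (h : RCder Λ φ ψ) :
    φ.bounded Λ ∧ ψ.bounded Λ := by
  induction h with
  | id φ h => exact ⟨h, h⟩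
  | topI φ h => exact ⟨h, trivial⟩
  | andE₁ φ ψ h1 h2 => exact ⟨⟨h1, h2⟩, h1⟩
  | andE₂ φ ψ h1 h2 => exact ⟨⟨h1, h2⟩, h2⟩
  | diaTrans α φ h1 h2 => exact ⟨⟨h1, h1, h2⟩, ⟨h1, h2⟩⟩
  | diaDown α β φ hβ h1 h2 => exact ⟨⟨h1, h2⟩, ⟨lt_trans hβ h1, h2⟩⟩
  | diaConj α β φ ψ hβ h1 h2 h3 =>
    exact ⟨⟨⟨h1, h2⟩, ⟨lt_trans hβ h1, h3⟩⟩, ⟨h1, h2, lt_trans hβ h1, h3⟩⟩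
  | andI h1 h2 ih1 ih2 => exact ⟨ih1.1, ih1.2, ih2.2⟩
  | cut h1 h2 ih1 ih2 => exact ⟨ih1.1, ih2.2⟩
  | diaMono α hα h ih => exact ⟨⟨hα, ih.1⟩, ⟨hα, ih.2⟩⟩

/-- weakening the tail to ⊤: `u++x ⊢ u` -/
theorem der_prefix {u x : List Ordinal.{0}} (h : LB (u ++ x)) : Der (wf (u ++ x)) (wf u) := by
  induction u with
  | nil => exact RCder.topI _ (wf_bounded h)
  | cons γ t ih =>
    have hγ : γ < Gamma0 := h γ (List.mem_cons_self)
    have ht : LB (t ++ x) := fun y hy => h y (List.mem_cons_of_mem _ hy)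
    exact RCder.diaMono γ hγ (ih ht)

/-- `u++x ⊢ ⟨b⟩x` when `u ≠ []` and `b` is below every modality of `u`. -/
theorem der_collapse {u x : List Ordinal.{0}} {b : Ordinal.{0}} (hu : u ≠ [])
    (hb : ∀ γ ∈ u, b ≤ γ) (hbG : b < Gamma0) (h : LB (u ++ x)) :
    Der (wf (u ++ x)) (.dia b (wf x)) := by
  induction u with
  | nil => exact absurd rfl hu
  | cons γ t ih =>
    have hγ : γ < Gamma0 := h γ (List.mem_cons_self)
    have ht : LB (t ++ x) := fun y hy => h y (List.mem_cons_of_mem _ hy)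
    have hbγ : b ≤ γ := hb γ (List.mem_cons_self)
    have hxb : (wf x).bounded Gamma0 := wf_bounded (LB_append ht).2
    rcases eq_or_ne t [] with rfl|htne
    · -- u = [γ] : ⟨γ⟩x ⊢ ⟨b⟩x
      rcases eq_or_lt_of_le hbγ with rfl|hlt
      · exact RCder.id _ ⟨hγ, hxb⟩
      · exact RCder.diaDown γ b (wf x) hlt hγ hxb
    · have ih' : Der (wf (t ++ x)) (.dia b (wf x)) :=
        ih htne (fun y hy => hb y (List.mem_cons_of_mem _ hy)) ht
      have step1 : Der (wf ((γ :: t) ++ x)) (.dia γ (.dia b (wf x))) :=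
        RCder.diaMono γ hγ ih'
      have step2 : Der (.dia γ (.dia b (wf x))) (.dia b (.dia b (wf x))) := by
        rcases eq_or_lt_of_le hbγ with rfl|hlt
        · exact RCder.id _ ⟨hγ, hγ, hxb⟩
        · exact RCder.diaDown γ b _ hlt hγ ⟨hbG, hxb⟩
      exact RCder.cut (RCder.cut step1 step2) (RCder.diaTrans b (wf x) hbG hxb)

/-- `u ∧ ⟨0⟩x ⊢ u⟨0⟩x` for `u` with strictly positive modalities. -/
theorem der_conj_to_worm {u x : List Ordinal.{0}} (hu : ∀ γ ∈ u, 0 < γ)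
    (h : LB (u ++ 0 :: x)) :
    Der (.and (wf u) (.dia 0 (wf x))) (wf (u ++ 0 :: x)) := by
  induction u with
  | nil =>
    have hx : (wf x).bounded Gamma0 :=
      wf_bounded (fun γ hγ => h γ (by simp [hγ]))
    exact RCder.andE₂ _ _ trivial ⟨Gamma0_pos, hx⟩
  | cons γ t ih =>
    have hγG : γ < Gamma0 := h γ (List.mem_cons_self)
    have hγ0 : 0 < γ := hu γ (List.mem_cons_self)
    have ht : LB (t ++ 0 :: x) := fun y hy => h y (List.mem_cons_of_mem _ hy)
    have hbt : (wf t).bounded Gamma0 := wf_bounded (LB_append ht).1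
    have hbx : (wf x).bounded Gamma0 :=
      wf_bounded (fun y hy => ht y (List.mem_append_right _ (List.mem_cons_of_mem _ hy)))
    have step1 : Der (.and (.dia γ (wf t)) (.dia 0 (wf x)))
        (.dia γ (.and (wf t) (.dia 0 (wf x)))) :=
      RCder.diaConj γ 0 (wf t) (wf x) hγ0 hγG hbt hbx
    have step2 := RCder.diaMono γ hγG (ih (fun y hy => hu y (List.mem_cons_of_mem _ hy)) ht)
    exact RCder.cut step1 step2

/-- `u⟨0⟩x ⊢ ⟨0⟩x` (prefix collapse), stated via append assoc. -/
theorem der_tail0 {u x : List Ordinal.{0}} (h : LB (u ++ 0 :: x)) :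
    Der (wf (u ++ 0 :: x)) (.dia 0 (wf x)) := by
  have he : u ++ 0 :: x = (u ++ [0]) ++ x := by simp
  rw [he]
  have h' : LB ((u ++ [0]) ++ x) := by rwa [← he]
  apply der_collapse (by simp) _ Gamma0_pos h'
  intro γ _
  exact zero_le (a := γ)

/-- promotion: translate a derivation by `m` -/
def up (m : Ordinal.{0}) : RCF → RCF
  | .top => .top
  | .var n => .var n
  | .and φ ψ => .and (up m φ) (up m ψ)
  | .dia a φ => .dia (m + a) (up m φ)

theorem up_bounded {m : Ordinal.{0}} (hm : m < Gamma0) :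
    ∀ {φ : RCF}, φ.bounded Gamma0 → (up m φ).bounded Gamma0 := by
  intro φ
  induction φ with
  | top => exact fun h => h
  | var n => exact fun h => h
  | and φ ψ ih1 ih2 => exact fun h => ⟨ih1 h.1, ih2 h.2⟩
  | dia a φ ih => exact fun h => ⟨add_lt_Gamma0 hm h.1, ih h.2⟩

theorem der_up {m : Ordinal.{0}} (hm : m < Gamma0) {φ ψ : RCF} (h : Der φ ψ) :
    Der (up m φ) (up m ψ) := by
  induction h with
  | id φ h => exact RCder.id _ (up_bounded hm h)
  | topI φ h => exact RCder.topI _ (up_bounded hm h)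
  | andE₁ φ ψ h1 h2 => exact RCder.andE₁ _ _ (up_bounded hm h1) (up_bounded hm h2)
  | andE₂ φ ψ h1 h2 => exact RCder.andE₂ _ _ (up_bounded hm h1) (up_bounded hm h2)
  | diaTrans α φ h1 h2 => exact RCder.diaTrans _ _ (add_lt_Gamma0 hm h1) (up_bounded hm h2)
  | diaDown α β φ hβ h1 h2 =>
    exact RCder.diaDown _ _ _ (add_lt_add_right hβ m) (add_lt_Gamma0 hm h1) (up_bounded hm h2)
  | diaConj α β φ ψ hβ h1 h2 h3 =>
    exact RCder.diaConj _ _ _ _ (add_lt_add_right hβ m) (add_lt_Gamma0 hm h1)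
      (up_bounded hm h2) (up_bounded hm h3)
  | andI h1 h2 ih1 ih2 => exact RCder.andI ih1 ih2
  | cut h1 h2 ih1 ih2 => exact RCder.cut ih1 ih2
  | diaMono α hα h ih => exact RCder.diaMono _ (add_lt_Gamma0 hm hα) ih

theorem up_wf (m : Ordinal.{0}) (w : List Ordinal.{0}) :
    up m (wf w) = wf (w.map (m + ·)) := by
  induction w with
  | nil => rfl
  | cons γ t ih => rw [List.map_cons]; exact congrArg (RCF.dia (m + γ)) ih

theorem map_add_sub {m : Ordinal.{0}} {w : List Ordinal.{0}} (h : ∀ γ ∈ w, m ≤ γ) :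
    (w.map (· - m)).map (m + ·) = w := by
  rw [List.map_map]
  have : ∀ x ∈ w, (m + (x - m)) = x := fun x hx => Ordinal.add_sub_cancel_of_le (h x hx)
  calc w.map ((m + ·) ∘ (· - m)) = w.map id := List.map_congr_left this
  _ = w := List.map_id w

/-- the key promotion corollary: from `w↓m ⊢ ⟨0⟩(v↓m)` infer `w ⊢ ⟨m⟩v`. -/
theorem der_promote {w v : List Ordinal.{0}} {m : Ordinal.{0}} (hm : m < Gamma0)
    (hw : ∀ γ ∈ w, m ≤ γ) (hv : ∀ γ ∈ v, m ≤ γ)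
    (h : Der (wf (w.map (· - m))) (.dia 0 (wf (v.map (· - m))))) :
    Der (wf w) (.dia m (wf v)) := by
  have h2 := der_up hm h
  rw [up_wf] at h2
  have h3 : up m (.dia 0 (wf (v.map (· - m)))) = .dia m (wf v) := by
    show RCF.dia (m + 0) (up m (wf (v.map (· - m)))) = _
    rw [add_zero, up_wf, map_add_sub hv]
  rw [h3, map_add_sub hw] at h2
  exact h2

/-! ### The main completeness lemmas -/

def StmtC (w v : List Ordinal.{0}) : Prop :=
  o v < o w → ∀ b : Ordinal.{0}, b < Gamma0 → (∀ γ ∈ w, b ≤ γ) → (∀ γ ∈ v, b ≤ γ) →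
    Der (wf w) (.dia b (wf v))

def StmtE (w v : List Ordinal.{0}) : Prop :=
  o v = o w → Der (wf w) (wf v) ∧ Der (wf v) (wf w)

def Stmt (w v : List Ordinal.{0}) : Prop := LB w → LB v → StmtC w v ∧ StmtE w v

theorem ord_lt_add_one_iff {a b : Ordinal.{0}} : a < b + 1 ↔ a ≤ b := by
  rw [add_one_eq_succ, Order.lt_succ_iff]

theorem ord_succ_inj {a b : Ordinal.{0}} (h : a + 1 = b + 1) : a = b := by
  apply le_antisymm
  · exact ord_lt_add_one_iff.1 (h ▸ lt_add_one a)
  · exact ord_lt_add_one_iff.1 (h ▸ lt_add_one b)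

theorem APinf.sum_lt {a b c : Ordinal.{0}} (h : APinf c) (ha : a < c) (hb : b < c) :
    a + b < c := by
  calc a + b < a + c := add_lt_add_right hb a
  _ = c := h.absorp ha

theorem not_isLimit_succ_ord (a : Ordinal.{0}) : ¬ Order.IsSuccLimit (a + 1) := by
  intro h
  exact absurd (h.succ_lt (lt_add_one a)) (by rw [add_one_eq_succ]; exact lt_irrefl _)
theorem core0 {w v : List Ordinal.{0}} (hw : w ≠ []) (hv : v ≠ [])
    (h0 : lmin w = 0 ∨ lmin v = 0)
    (IH : ∀ w' v' : List Ordinal.{0},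
      w'.length + v'.length < w.length + v.length → Stmt w' v')
    (hLw : LB w) (hLv : LB v) :
    (o v < o w → Der (wf w) (.dia 0 (wf v))) ∧ StmtE w v := by
  have hG0 : (0:Ordinal.{0}) < Gamma0 := Gamma0_pos
  by_cases hw0 : lmin w = 0
  · -- w = u ++ 0 :: x
    set u := (sp 0 w).1 with hu_def
    set x := (sp 0 w).2 with hx_def
    have h0w : (0:Ordinal.{0}) ∈ w := by rw [← hw0]; exact lmin_mem hw
    have hwux : w = u ++ 0 :: x := sp_append h0w
    have hosw : o w = o x + 1 + o u := o_split0 hw hw0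
    have hupos : ∀ γ ∈ u, 0 < γ :=
      fun γ hγ => pos_iff_ne_zero.2 (sp_fst_ne hγ)
    have hlens := sp_lengths h0w
    have hulen : u.length < w.length := hlens.1
    have hxlen : x.length < w.length := hlens.2
    have hLux : LB (u ++ 0 :: x) := by rw [← hwux]; exact hLw
    have hLu : LB u := (LB_append hLux).1
    have hLx : LB x := fun γ hγ => (LB_append hLux).2 γ (List.mem_cons_of_mem _ hγ)
    -- w ⊢ ⟨0⟩x
    have hw_dx : Der (wf w) (.dia 0 (wf x)) := by
      rw [hwux]; exact der_tail0 hLux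
    -- w ⊢ u
    have hw_u : Der (wf w) (wf u) := by
      rw [hwux]
      have : (u ++ 0 :: x) = u ++ (0 :: x) := rfl
      exact der_prefix hLux
    have hCpart : o v < o w → Der (wf w) (.dia 0 (wf v)) := by
      intro hlt
      by_cases hvx : o v ≤ o x
      · rcases lt_or_eq_of_le hvx with hvx'|hvx'
        · have hxv : Der (wf x) (.dia 0 (wf v)) :=
            ((IH x v (by omega)) hLx hLv).1 hvx' 0 hG0
              (fun γ _ => zero_le (a := γ)) (fun γ _ => zero_le (a := γ))
          exact RCder.cut hw_dx (RCder.cut (RCder.diaMono 0 hG0 hxv)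
            (RCder.diaTrans 0 (wf v) hG0 (wf_bounded hLv)))
        · have hxv : Der (wf x) (wf v) :=
            (((IH x v (by omega)) hLx hLv).2 hvx').1
          exact RCder.cut hw_dx (RCder.diaMono 0 hG0 hxv)
      · push_neg at hvx
        have hune : u ≠ [] := by
          intro hc
          rw [hc, o_nil, add_zero] at hosw
          rw [hosw] at hlt
          exact absurd (ord_lt_add_one_iff.1 hlt) (not_le.2 hvx)
        have hlmu : lmin u ≠ 0 := ne_of_gt (hupos _ (lmin_mem hune))
        have huAP : APinf (o u) := o_apinf hune hlmu
        have howu : o w = o x + o u := by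
          rw [hosw, add_assoc, huAP.one_add]
        by_cases hv0 : lmin v = 0
        · -- v = s ++ 0 :: y
          set s := (sp 0 v).1 with hs_def
          set y := (sp 0 v).2 with hy_def
          have h0v : (0:Ordinal.{0}) ∈ v := by rw [← hv0]; exact lmin_mem hv
          have hvsy : v = s ++ 0 :: y := sp_append h0v
          have hosv : o v = o y + 1 + o s := o_split0 hv hv0
          have hspos : ∀ γ ∈ s, 0 < γ :=
            fun γ hγ => pos_iff_ne_zero.2 (sp_fst_ne hγ)
          have hlensv := sp_lengths h0v
          have hslen : s.length < v.length := hlensv.1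
          have hylen : y.length < v.length := hlensv.2
          have hLsy : LB (s ++ 0 :: y) := by rw [← hvsy]; exact hLv
          have hLs : LB s := (LB_append hLsy).1
          have hLy : LB y := fun γ hγ => (LB_append hLsy).2 γ (List.mem_cons_of_mem _ hγ)
          have hoy : o y < o v := by
            rw [hosv]
            exact lt_of_lt_of_le (lt_add_one _) le_self_add
          have hwy : Der (wf w) (.dia 0 (wf y)) :=
            ((IH w y (by omega)) hLw hLy).1 (hoy.trans hlt) 0 hG0
              (fun γ _ => zero_le (a := γ)) (fun γ _ => zero_le (a := γ))
          by_cases hs0 : s = []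
          · -- v = 0 :: y ; use positive head of u
            obtain ⟨γ, u'', hgu⟩ := List.exists_cons_of_ne_nil hune
            have hγpos : 0 < γ := hupos γ (by rw [hgu]; exact List.mem_cons_self)
            have hγG : γ < Gamma0 := hLu γ (by rw [hgu]; exact List.mem_cons_self)
            have hwtop : Der (wf w) (.dia γ .top) := by
              rw [hwux, hgu]
              exact RCder.diaMono γ hγG (RCder.topI _ (wf_bounded
                (fun z hz => hLux z (by rw [hgu] at hLux ⊢; exact List.mem_cons_of_mem _ hz))))
            have hby : (wf y).bounded Gamma0 := wf_bounded hLy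
            have handI := RCder.andI hwtop hwy
            have hconj := RCder.diaConj γ 0 .top (wf y) hγpos hγG trivial hby
            have hmono := RCder.diaMono γ hγG
              (RCder.andE₂ .top (.dia 0 (wf y)) trivial ⟨hG0, hby⟩)
            have hdown := RCder.diaDown γ 0 (.dia 0 (wf y)) hγpos hγG ⟨hG0, hby⟩
            have hfin : Der (wf w) (.dia 0 (.dia 0 (wf y))) :=
              RCder.cut (RCder.cut (RCder.cut handI hconj) hmono) hdown
            have : wf v = .dia 0 (wf y) := by rw [hvsy, hs0]; rfl
            rw [this]
            exact hfin
          · -- s ≠ []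
            have hlms : lmin s ≠ 0 := ne_of_gt (hspos _ (lmin_mem hs0))
            have hsAP : APinf (o s) := o_apinf hs0 hlms
            have hsu : o s < o u := by
              by_contra hcon
              push_neg at hcon
              have h2 : o x + o s ≤ o v := by
                rw [hosv]
                exact hsAP.lt_add (a := o y + 1) (by rw [← hosv]; exact hvx)
              have h3' : o v < o x + o u := by rw [← howu]; exact hlt
              have h3 : o v < o x + o s :=
                lt_of_lt_of_le h3' (add_le_add_right hcon (o x))
              exact absurd h2 (not_le.2 h3)
            set m₁ := min (lmin u) (lmin s) with hm₁
            have hm₁pos : 0 < m₁ :=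
              lt_min (hupos _ (lmin_mem hune)) (hspos _ (lmin_mem hs0))
            have hm₁G : m₁ < Gamma0 :=
              lt_of_le_of_lt (min_le_left _ _) (hLu _ (lmin_mem hune))
            have hus : Der (wf u) (.dia m₁ (wf s)) :=
              ((IH u s (by omega)) hLu hLs).1 hsu m₁ hm₁G
                (fun γ hγ => le_trans (min_le_left _ _) (lmin_le hγ))
                (fun γ hγ => le_trans (min_le_right _ _) (lmin_le hγ))
            have h4 : Der (wf w) (.dia m₁ (wf s)) := RCder.cut hw_u hus
            have h5 := RCder.andI h4 hwy
            have hbs : (wf s).bounded Gamma0 := wf_bounded hLs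
            have hby : (wf y).bounded Gamma0 := wf_bounded hLy
            have h6 := RCder.diaConj m₁ 0 (wf s) (wf y) hm₁pos hm₁G hbs hby
            have h7 : Der (.and (wf s) (.dia 0 (wf y))) (wf v) := by
              rw [hvsy]
              exact der_conj_to_worm hspos hLsy
            have h8 := RCder.diaMono m₁ hm₁G h7
            have h9 := RCder.diaDown m₁ 0 (wf v) hm₁pos hm₁G (wf_bounded hLv)
            exact RCder.cut (RCder.cut (RCder.cut h5 h6) h8) h9
        · -- lmin v ≠ 0 : v is all-positive
          have hvAP : APinf (o v) := o_apinf hv hv0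
          have hvpos : ∀ γ ∈ v, 0 < γ := by
            intro γ hγ
            rcases eq_or_ne γ 0 with rfl|h
            · exact absurd (le_antisymm (lmin_le hγ) (zero_le)) hv0
            · exact pos_iff_ne_zero.2 h
          have hvu : o v < o u := by
            by_contra hcon
            push_neg at hcon
            have h2 : o x + o v = o v := hvAP.absorp hvx
            have h3 : o w ≤ o v := by
              rw [howu]
              calc o x + o u ≤ o x + o v := add_le_add_right hcon (o x)
              _ = o v := h2
            exact absurd (lt_of_lt_of_le hlt h3) (lt_irrefl _)
          set m₁ := min (lmin u) (lmin v) with hm₁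
          have hm₁pos : 0 < m₁ :=
            lt_min (hupos _ (lmin_mem hune)) (hvpos _ (lmin_mem hv))
          have hm₁G : m₁ < Gamma0 :=
            lt_of_le_of_lt (min_le_left _ _) (hLu _ (lmin_mem hune))
          have huv : Der (wf u) (.dia m₁ (wf v)) :=
            ((IH u v (by omega)) hLu hLv).1 hvu m₁ hm₁G
              (fun γ hγ => le_trans (min_le_left _ _) (lmin_le hγ))
              (fun γ hγ => le_trans (min_le_right _ _) (lmin_le hγ))
          have h4 : Der (wf w) (.dia m₁ (wf v)) := RCder.cut hw_u huv
          exact RCder.cut h4 (RCder.diaDown m₁ 0 (wf v) hm₁pos hm₁G (wf_bounded hLv))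
    refine ⟨hCpart, ?_⟩
    intro heq
    by_cases hv0 : lmin v = 0
    · -- v = s ++ 0 :: y
      set s := (sp 0 v).1 with hs_def
      set y := (sp 0 v).2 with hy_def
      have h0v : (0:Ordinal.{0}) ∈ v := by rw [← hv0]; exact lmin_mem hv
      have hvsy : v = s ++ 0 :: y := sp_append h0v
      have hosv : o v = o y + 1 + o s := o_split0 hv hv0
      have hspos : ∀ γ ∈ s, 0 < γ :=
        fun γ hγ => pos_iff_ne_zero.2 (sp_fst_ne hγ)
      have hlensv := sp_lengths h0v
      have hslen : s.length < v.length := hlensv.1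
      have hylen : y.length < v.length := hlensv.2
      have hLsy : LB (s ++ 0 :: y) := by rw [← hvsy]; exact hLv
      have hLs : LB s := (LB_append hLsy).1
      have hLy : LB y := fun γ hγ => (LB_append hLsy).2 γ (List.mem_cons_of_mem _ hγ)
      have hyo : o y < o v := by
        rw [hosv]
        exact lt_of_lt_of_le (lt_add_one _) le_self_add
      have hxo : o x < o w := by
        rw [hosw]
        exact lt_of_lt_of_le (lt_add_one _) le_self_add
      by_cases hu0 : u = []
      · by_cases hs0 : s = []
        · have hxy : o y = o x := by
            apply ord_succ_inj
            have h1 : o v = o y + 1 := by rw [hosv, hs0, o_nil, add_zero]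
            have h2 : o w = o x + 1 := by rw [hosw, hu0, o_nil, add_zero]
            rw [← h1, ← h2, heq]
          have hIH := ((IH x y (by omega)) hLx hLy).2 hxy
          have hwx : wf w = .dia 0 (wf x) := by rw [hwux, hu0]; rfl
          have hvy : wf v = .dia 0 (wf y) := by rw [hvsy, hs0]; rfl
          constructor
          · rw [hwx, hvy]; exact RCder.diaMono 0 hG0 hIH.1
          · rw [hwx, hvy]; exact RCder.diaMono 0 hG0 hIH.2
        · exfalso
          have hlms : lmin s ≠ 0 := ne_of_gt (hspos _ (lmin_mem hs0))
          have hsAP : APinf (o s) := o_apinf hs0 hlms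
          have hlim : Order.IsSuccLimit (o v) := by
            rw [hosv]
            exact isSuccLimit_add _ hsAP.isLimit
          rw [heq, hosw, hu0, o_nil, add_zero] at hlim
          exact not_isLimit_succ_ord _ hlim
      · have hlmu' : lmin u ≠ 0 := ne_of_gt (hupos _ (lmin_mem hu0))
        have huAP : APinf (o u) := o_apinf hu0 hlmu'
        have howu : o w = o x + o u := by rw [hosw, add_assoc, huAP.one_add]
        by_cases hs0 : s = []
        · exfalso
          have hlim : Order.IsSuccLimit (o w) := by
            rw [hosw]
            exact isSuccLimit_add _ huAP.isLimit
          rw [← heq, hosv, hs0, o_nil, add_zero] at hlim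
          exact not_isLimit_succ_ord _ hlim
        · have hlms : lmin s ≠ 0 := ne_of_gt (hspos _ (lmin_mem hs0))
          have hsAP : APinf (o s) := o_apinf hs0 hlms
          have hovy : o v = o y + o s := by rw [hosv, add_assoc, hsAP.one_add]
          have hsu : o s ≤ o u := by
            have h2 : o x + o s ≤ o v := by
              rw [hosv]
              exact hsAP.lt_add (a := o y + 1) (by rw [← hosv, heq]; exact hxo)
            have h4 : o x + o s ≤ o x + o u := by rw [← howu, ← heq]; exact h2
            exact (add_le_add_iff_left (o x)).1 h4
          have hus : o u ≤ o s := by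
            have h2 : o y + o u ≤ o w := by
              rw [hosw]
              exact huAP.lt_add (a := o x + 1) (by rw [← hosw, ← heq]; exact hyo)
            have h4 : o y + o u ≤ o y + o s := by rw [← hovy, heq]; exact h2
            exact (add_le_add_iff_left (o y)).1 h4
          have heqsu : o s = o u := le_antisymm hsu hus
          have hIHus := ((IH u s (by omega)) hLu hLs).2 heqsu
          have hwy : Der (wf w) (.dia 0 (wf y)) :=
            ((IH w y (by omega)) hLw hLy).1 (hyo.trans_le heq.le) 0 hG0
              (fun γ _ => zero_le (a := γ)) (fun γ _ => zero_le (a := γ))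
          have hd1 : Der (wf w) (wf s) := RCder.cut hw_u hIHus.1
          have hd3 : Der (wf w) (wf v) :=
            RCder.cut (RCder.andI hd1 hwy) (by rw [hvsy]; exact der_conj_to_worm hspos hLsy)
          have hv_s : Der (wf v) (wf s) := by rw [hvsy]; exact der_prefix hLsy
          have hvdx : Der (wf v) (.dia 0 (wf x)) :=
            ((IH v x (by omega)) hLv hLx).1 (by rw [heq]; exact hxo) 0 hG0
              (fun γ _ => zero_le (a := γ)) (fun γ _ => zero_le (a := γ))
          have hd4 : Der (wf v) (wf u) := RCder.cut hv_s hIHus.2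
          have hd6 : Der (wf v) (wf w) :=
            RCder.cut (RCder.andI hd4 hvdx) (by rw [hwux]; exact der_conj_to_worm hupos hLux)
          exact ⟨hd3, hd6⟩
    · -- lmin v ≠ 0
      have hvAP : APinf (o v) := o_apinf hv hv0
      by_cases hu0 : u = []
      · exfalso
        have hlim := hvAP.isLimit
        rw [heq, hosw, hu0, o_nil, add_zero] at hlim
        exact not_isLimit_succ_ord _ hlim
      · have hlmu' : lmin u ≠ 0 := ne_of_gt (hupos _ (lmin_mem hu0))
        have huAP : APinf (o u) := o_apinf hu0 hlmu'
        have howu : o w = o x + o u := by rw [hosw, add_assoc, huAP.one_add]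
        have hxo : o x < o v := by
          rw [heq, howu]
          have := add_lt_add_right huAP.pos (o x)
          rwa [add_zero] at this
        have h2 : o x + o v = o v := hvAP.absorp hxo
        have huv : o v = o u := by
          have h3 : o x + o u = o x + o v := by rw [← howu, ← heq, h2]
          exact (add_left_cancel h3).symm
        have hIH := ((IH u v (by omega)) hLu hLv).2 huv
        constructor
        · exact RCder.cut hw_u hIH.1
        · have hvdx : Der (wf v) (.dia 0 (wf x)) :=
            ((IH v x (by omega)) hLv hLx).1 hxo 0 hG0
              (fun γ _ => zero_le (a := γ)) (fun γ _ => zero_le (a := γ))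
          exact RCder.cut (RCder.andI hIH.2 hvdx)
            (by rw [hwux]; exact der_conj_to_worm hupos hLux)
  · -- lmin w ≠ 0 : w is all-positive, v = s ++ 0 :: y
    have hv0 : lmin v = 0 := h0.resolve_left hw0
    have hwpos : ∀ γ ∈ w, 0 < γ := by
      intro γ hγ
      rcases eq_or_ne γ 0 with rfl|h
      · exact absurd (le_antisymm (lmin_le hγ) (zero_le)) hw0
      · exact pos_iff_ne_zero.2 h
    have hwAP : APinf (o w) := o_apinf hw hw0
    set s := (sp 0 v).1 with hs_def
    set y := (sp 0 v).2 with hy_def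
    have h0v : (0:Ordinal.{0}) ∈ v := by rw [← hv0]; exact lmin_mem hv
    have hvsy : v = s ++ 0 :: y := sp_append h0v
    have hosv : o v = o y + 1 + o s := o_split0 hv hv0
    have hspos : ∀ γ ∈ s, 0 < γ :=
      fun γ hγ => pos_iff_ne_zero.2 (sp_fst_ne hγ)
    have hlensv := sp_lengths h0v
    have hslen : s.length < v.length := hlensv.1
    have hylen : y.length < v.length := hlensv.2
    have hLsy : LB (s ++ 0 :: y) := by rw [← hvsy]; exact hLv
    have hLs : LB s := (LB_append hLsy).1
    have hLy : LB y := fun γ hγ => (LB_append hLsy).2 γ (List.mem_cons_of_mem _ hγ)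
    have hyo : o y < o v := by
      rw [hosv]
      exact lt_of_lt_of_le (lt_add_one _) le_self_add
    constructor
    · -- (C) part
      intro hlt
      have hwy : Der (wf w) (.dia 0 (wf y)) :=
        ((IH w y (by omega)) hLw hLy).1 (hyo.trans hlt) 0 hG0
          (fun γ _ => zero_le (a := γ)) (fun γ _ => zero_le (a := γ))
      by_cases hs0 : s = []
      · obtain ⟨γ, w'', hgw⟩ := List.exists_cons_of_ne_nil hw
        have hγpos : 0 < γ := hwpos γ (by rw [hgw]; exact List.mem_cons_self)
        have hγG : γ < Gamma0 := hLw γ (by rw [hgw]; exact List.mem_cons_self)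
        have hwtop : Der (wf w) (.dia γ .top) := by
          rw [hgw]
          exact RCder.diaMono γ hγG (RCder.topI _ (wf_bounded
            (fun z hz => hLw z (by rw [hgw]; exact List.mem_cons_of_mem _ hz))))
        have hby : (wf y).bounded Gamma0 := wf_bounded hLy
        have handI := RCder.andI hwtop hwy
        have hconj := RCder.diaConj γ 0 .top (wf y) hγpos hγG trivial hby
        have hmono := RCder.diaMono γ hγG
          (RCder.andE₂ .top (.dia 0 (wf y)) trivial ⟨hG0, hby⟩)
        have hdown := RCder.diaDown γ 0 (.dia 0 (wf y)) hγpos hγG ⟨hG0, hby⟩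
        have hfin : Der (wf w) (.dia 0 (.dia 0 (wf y))) :=
          RCder.cut (RCder.cut (RCder.cut handI hconj) hmono) hdown
        have : wf v = .dia 0 (wf y) := by rw [hvsy, hs0]; rfl
        rw [this]
        exact hfin
      · have hlms : lmin s ≠ 0 := ne_of_gt (hspos _ (lmin_mem hs0))
        have hso : o s < o w := by
          apply lt_of_le_of_lt _ hlt
          rw [hosv]
          exact le_add_self
        set m₁ := min (lmin w) (lmin s) with hm₁
        have hm₁pos : 0 < m₁ :=
          lt_min (hwpos _ (lmin_mem hw)) (hspos _ (lmin_mem hs0))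
        have hm₁G : m₁ < Gamma0 :=
          lt_of_le_of_lt (min_le_left _ _) (hLw _ (lmin_mem hw))
        have hws : Der (wf w) (.dia m₁ (wf s)) :=
          ((IH w s (by omega)) hLw hLs).1 hso m₁ hm₁G
            (fun γ hγ => le_trans (min_le_left _ _) (lmin_le hγ))
            (fun γ hγ => le_trans (min_le_right _ _) (lmin_le hγ))
        have hbs : (wf s).bounded Gamma0 := wf_bounded hLs
        have hby : (wf y).bounded Gamma0 := wf_bounded hLy
        have h5 := RCder.andI hws hwy
        have h6 := RCder.diaConj m₁ 0 (wf s) (wf y) hm₁pos hm₁G hbs hby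
        have h7 : Der (.and (wf s) (.dia 0 (wf y))) (wf v) := by
          rw [hvsy]
          exact der_conj_to_worm hspos hLsy
        have h8 := RCder.diaMono m₁ hm₁G h7
        have h9 := RCder.diaDown m₁ 0 (wf v) hm₁pos hm₁G (wf_bounded hLv)
        exact RCder.cut (RCder.cut (RCder.cut h5 h6) h8) h9
    · -- (E) part
      intro heq
      by_cases hs0 : s = []
      · exfalso
        have hlim := hwAP.isLimit
        rw [← heq, hosv, hs0, o_nil, add_zero] at hlim
        exact not_isLimit_succ_ord _ hlim
      · have hlms : lmin s ≠ 0 := ne_of_gt (hspos _ (lmin_mem hs0))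
        have hsAP : APinf (o s) := o_apinf hs0 hlms
        have hvAP : APinf (o v) := heq ▸ hwAP
        have hsv : o s ≤ o v := by
          rw [hosv]
          exact le_add_self
        have hseq : o s = o v := by
          rcases lt_or_eq_of_le hsv with hlt'|h
          · exfalso
            have hyv : o y + 1 < o v := by
              have h' := add_lt_add_right (o_pos hs0) (o y + 1)
              rw [add_zero] at h'
              rw [hosv]
              exact h'
            have : o v < o v := by
              conv_lhs => rw [hosv]
              exact hvAP.sum_lt hyv hlt'
            exact absurd this (lt_irrefl _)
          · exact h
        have hIH := ((IH w s (by omega)) hLw hLs).2 (hseq.trans heq)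
        have hwy : Der (wf w) (.dia 0 (wf y)) :=
          ((IH w y (by omega)) hLw hLy).1 (hyo.trans_le heq.le) 0 hG0
            (fun γ _ => zero_le (a := γ)) (fun γ _ => zero_le (a := γ))
        constructor
        · exact RCder.cut (RCder.andI hIH.1 hwy)
            (by rw [hvsy]; exact der_conj_to_worm hspos hLsy)
        · have hv_s : Der (wf v) (wf s) := by rw [hvsy]; exact der_prefix hLsy
          exact RCder.cut hv_s hIH.2

theorem GEN : ∀ n : ℕ, ∀ w v : List Ordinal.{0}, w.length + v.length ≤ n → Stmt w v := by
  intro n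
  induction n using Nat.strong_induction_on with
  | _ n IHn =>
    intro w v hlen hLw hLv
    by_cases hw : w = []
    · subst hw
      constructor
      · intro hlt
        rw [o_nil] at hlt
        exact absurd hlt (not_lt.2 (zero_le))
      · intro heq
        rw [o_nil] at heq
        have hv : v = [] := by
          by_contra hc
          exact absurd heq (ne_of_gt (o_pos hc))
        subst hv
        exact ⟨RCder.id _ (wf_bounded hLw), RCder.id _ (wf_bounded hLw)⟩
    by_cases hv : v = []
    · subst hv
      constructor
      · intro _ b hbG hbw _
        have h := der_collapse hw hbw hbG (by rwa [List.append_nil])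
        rwa [List.append_nil] at h
      · intro heq
        rw [o_nil] at heq
        exact absurd heq.symm (ne_of_gt (o_pos hw))
    set m := min (lmin w) (lmin v) with hm
    have hmw : m ≤ lmin w := min_le_left _ _
    have hmv : m ≤ lmin v := min_le_right _ _
    have hmemw : ∀ γ ∈ w, m ≤ γ := fun γ hγ => le_trans hmw (lmin_le hγ)
    have hmemv : ∀ γ ∈ v, m ≤ γ := fun γ hγ => le_trans hmv (lmin_le hγ)
    have hmG : m < Gamma0 := lt_of_le_of_lt hmw (hLw _ (lmin_mem hw))
    set w' := w.map (· - m) with hw'def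
    set v' := v.map (· - m) with hv'def
    have hwne' : w' ≠ [] := fun hc => hw (List.map_eq_nil_iff.1 hc)
    have hvne' : v' ≠ [] := fun hc => hv (List.map_eq_nil_iff.1 hc)
    have hLw' : LB w' := by
      intro γ hγ
      obtain ⟨δ, hδ, rfl⟩ := List.mem_map.1 hγ
      exact lt_of_le_of_lt (Ordinal.sub_le_self δ m) (hLw δ hδ)
    have hLv' : LB v' := by
      intro γ hγ
      obtain ⟨δ, hδ, rfl⟩ := List.mem_map.1 hγ
      exact lt_of_le_of_lt (Ordinal.sub_le_self δ m) (hLv δ hδ)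
    have how : o w = hexp m (o w') := o_shift hw hmw
    have hov : o v = hexp m (o v') := o_shift hv hmv
    have h0' : lmin w' = 0 ∨ lmin v' = 0 := by
      rcases min_cases (lmin w) (lmin v) with ⟨he, _⟩|⟨he, _⟩
      · left
        rw [hw'def, lmin_map_sub hw, hm, he, Ordinal.sub_self]
      · right
        rw [hv'def, lmin_map_sub hv, hm, he, Ordinal.sub_self]
    have hlen' : w'.length + v'.length = w.length + v.length := by
      rw [hw'def, hv'def, List.length_map, List.length_map]
    have IH' : ∀ a b : List Ordinal.{0},
        a.length + b.length < w'.length + v'.length → Stmt a b := by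
      intro a b hab
      rw [hlen'] at hab
      exact IHn (a.length + b.length) (by omega) a b (le_refl _)
    have hcore := core0 hwne' hvne' h0' IH' hLw' hLv'
    constructor
    · intro hlt b hbG hbw hbv
      have hlt' : o v' < o w' := by
        rw [how, hov] at hlt
        exact (hexp_strictMono m).lt_iff_lt.1 hlt
      have hd := hcore.1 hlt'
      have hprom : Der (wf w) (.dia m (wf v)) := der_promote hmG hmemw hmemv hd
      have hbm : b ≤ m := le_min (le_lmin hw hbw) (le_lmin hv hbv)
      rcases eq_or_lt_of_le hbm with rfl|hblt
      · exact hprom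
      · exact RCder.cut hprom (RCder.diaDown m b (wf v) hblt hmG (wf_bounded hLv))
    · intro heq
      have heq' : o v' = o w' := by
        rw [how, hov] at heq
        exact (hexp_strictMono m).injective heq
      have hE := hcore.2 heq'
      constructor
      · have h := der_up hmG hE.1
        rw [up_wf, up_wf, map_add_sub hmemw, map_add_sub hmemv] at h
        exact h
      · have h := der_up hmG hE.2
        rw [up_wf, up_wf, map_add_sub hmemw, map_add_sub hmemv] at h
        exact h


def tl : RCF → List Ordinal.{0}
  | .dia a φ => a :: tl φ
  | _ => []

theorem wf_tl : ∀ {A : RCF}, A.isWorm → wf (tl A) = A := by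
  intro A
  induction A with
  | top => intro _; rfl
  | var n => intro h; exact h.elim
  | and φ ψ _ _ => intro h; exact h.elim
  | dia a φ ih =>
    intro h
    show RCF.dia a (wf (tl φ)) = RCF.dia a φ
    rw [ih h]

theorem LB_tl : ∀ {A : RCF}, A.bounded Gamma0 → LB (tl A) := by
  intro A
  induction A with
  | top => intro _ γ hγ; exact absurd hγ List.not_mem_nil
  | var n => intro _ γ hγ; exact absurd hγ List.not_mem_nil
  | and φ ψ _ _ => intro _ γ hγ; exact absurd hγ List.not_mem_nil
  | dia a φ ih =>
    intro h γ hγ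
    rcases List.mem_cons.1 hγ with rfl|h'
    · exact h.1
    · exact ih h.2 γ h'

/-- completeness, <-case -/
theorem main_C {A B : RCF} (hA : isGWorm A) (hB : isGWorm B)
    (h : o (tl B) < o (tl A)) : RCder Gamma0 A (.dia 0 B) := by
  have hd := ((GEN ((tl A).length + (tl B).length) (tl A) (tl B) (le_refl _))
    (LB_tl hA.2) (LB_tl hB.2)).1 h 0 Gamma0_pos
    (fun γ _ => zero_le (a := γ)) (fun γ _ => zero_le (a := γ))
  rwa [wf_tl hA.1, wf_tl hB.1] at hd

/-- completeness, =-case -/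
theorem main_E {A B : RCF} (hA : isGWorm A) (hB : isGWorm B)
    (h : o (tl B) = o (tl A)) : RCder Gamma0 A B ∧ RCder Gamma0 B A := by
  have hd := ((GEN ((tl A).length + (tl B).length) (tl A) (tl B) (le_refl _))
    (LB_tl hA.2) (LB_tl hB.2)).2 h
  rwa [wf_tl hA.1, wf_tl hB.1] at hd

theorem wleq_of_le {A B : RCF} (hA : isGWorm A) (hB : isGWorm B)
    (h : o (tl A) ≤ o (tl B)) : wleq A B := by
  rcases lt_or_eq_of_le h with h'|h'
  · exact Or.inl (main_C hB hA h')
  · exact Or.inr (main_E hB hA h')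

/-- `≤₀` is a pre-well-order on `W_{Γ₀}`: reflexive, transitive, total, and
every nonempty set of worms has a `≤₀`-minimal element. -/
theorem wleq_preWellOrder :
    (∀ A, isGWorm A → wleq A A) ∧
    (∀ A B C, isGWorm A → isGWorm B → isGWorm C →
      wleq A B → wleq B C → wleq A C) ∧
    (∀ A B, isGWorm A → isGWorm B → wleq A B ∨ wleq B A) ∧
    (∀ S : Set RCF, (∀ A ∈ S, isGWorm A) → S.Nonempty →
      ∃ M ∈ S, ∀ A ∈ S, wleq M A) := by
  refine ⟨?_, ?_, ?_, ?_⟩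
  · intro A hA
    exact Or.inr ⟨RCder.id A hA.2, RCder.id A hA.2⟩
  · intro A B C hA hB hC h1 h2
    rcases h1 with h1|⟨h1a, h1b⟩
    · rcases h2 with h2|⟨h2a, h2b⟩
      · -- C ⊢ ◇0 B, B ⊢ ◇0 A
        refine Or.inl (RCder.cut h2 (RCder.cut (RCder.diaMono 0 Gamma0_pos h1)
          (RCder.diaTrans 0 A Gamma0_pos hA.2)))
      · exact Or.inl (RCder.cut h2a h1)
    · rcases h2 with h2|⟨h2a, h2b⟩
      · exact Or.inl (RCder.cut h2 (RCder.diaMono 0 Gamma0_pos h1a))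
      · exact Or.inr ⟨RCder.cut h2a h1a, RCder.cut h1b h2b⟩
  · intro A B hA hB
    rcases le_total (o (tl A)) (o (tl B)) with h|h
    · exact Or.inl (wleq_of_le hA hB h)
    · exact Or.inr (wleq_of_le hB hA h)
  · intro S hS ⟨A₀, hA₀⟩
    have hTne : ((fun A => o (tl A)) '' S).Nonempty := ⟨_, Set.mem_image_of_mem _ hA₀⟩
    obtain ⟨M, hMS, hMμ⟩ := csInf_mem hTne
    refine ⟨M, hMS, fun A hAS => ?_⟩
    have hle : o (tl M) ≤ o (tl A) := by
      have h1 : (fun A => o (tl A)) M ≤ (fun A => o (tl A)) A := by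
        rw [hMμ]
        exact csInf_le (OrderBot.bddBelow _) (Set.mem_image_of_mem _ hAS)
      exact h1
    exact wleq_of_le (hS M hMS) (hS A hAS) hle
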